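/- Let a ∈ ℂ and ω ∈ ℂ with |ω| = 1. Then the cubic polynomial p(λ) = -λ³ + a λ² - ω · (conj a) · λ + ω has at least one root λ ∈ ℂ with |λ| = 1. -/

import Mathlib

open Complex

/-- The cubic `-λ³ + aλ² - ω (conj a) λ + ω` with `|ω| = 1` has a root on the
unit circle. -/
theorem stmt_2 (a ω : ℂ) (hω : ‖ω‖ = 1) :
    ∃ l : ℂ, ‖l‖ = 1 ∧
      -l ^ 3 + a * l ^ 2 - ω * (starRingEnd ℂ a) * l + ω = 0 := by
  obtain ⟨u, hu⟩ := IsAlgClosed.exists_pow_nat_eq (-ω) (n := 2) (by norm_num)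
  have hau : ‖u‖ = 1 := by
    have h2 : ‖u‖ ^ 2 = 1 := by
      rw [← norm_pow, hu, norm_neg, hω]
    nlinarith [norm_nonneg u]
  have huc : u * (starRingEnd ℂ) u = 1 := by
    rw [Complex.mul_conj]
    norm_cast
    rw [← Complex.sq_norm, hau]; norm_num
  set g : ℝ → ℝ := fun t =>
    ((a * Complex.exp (t * I) - Complex.exp (3 * t * I)) * (starRingEnd ℂ) u).re with hg
  have hcont : Continuous g := by fun_prop
  have hanti : ∀ t : ℝ, g (t + Real.pi) = - g t := by
    intro t
    have e1 : Complex.exp ((↑(t + Real.pi)) * I) = -Complex.exp (↑t * I) := by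
      push_cast
      rw [add_mul, Complex.exp_add, Complex.exp_pi_mul_I]; ring
    have e3 : Complex.exp (3 * (↑(t + Real.pi)) * I) = -Complex.exp (3 * ↑t * I) := by
      push_cast
      rw [show (3:ℂ) * (↑t + ↑Real.pi) * I = 3 * ↑t * I + (↑Real.pi * I + (↑Real.pi * I + ↑Real.pi * I)) by ring,
        Complex.exp_add, Complex.exp_add, Complex.exp_add, Complex.exp_pi_mul_I]
      ring
    simp only [hg, e1, e3]
    rw [show a * -Complex.exp (↑t * I) - -Complex.exp (3 * ↑t * I)
        = -((a * Complex.exp (↑t * I) - Complex.exp (3 * ↑t * I))) by ring]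
    rw [neg_mul, Complex.neg_re]
  -- find zero of g on [0, π]
  have hpi : (0:ℝ) ≤ Real.pi := Real.pi_pos.le
  have hex : ∃ t : ℝ, g t = 0 := by
    rcases le_or_gt (g 0) 0 with h | h
    · have h' : (0:ℝ) ∈ Set.Icc (g 0) (g Real.pi) := by
        constructor
        · exact h
        · rw [show Real.pi = 0 + Real.pi by ring, hanti]; linarith
      obtain ⟨t, _, ht⟩ := intermediate_value_Icc hpi hcont.continuousOn h'
      exact ⟨t, ht⟩
    · have h' : (0:ℝ) ∈ Set.Icc (g Real.pi) (g 0) := by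
        constructor
        · rw [show Real.pi = 0 + Real.pi by ring, hanti]; linarith
        · linarith
      obtain ⟨t, _, ht⟩ := intermediate_value_Icc' hpi hcont.continuousOn h'
      exact ⟨t, ht⟩
  obtain ⟨t, ht⟩ := hex
  refine ⟨Complex.exp (2 * t * I), ?_, ?_⟩
  · rw [Complex.norm_exp]
    norm_num
  · -- main algebraic identity
    set E : ℂ := Complex.exp (↑t * I) with hE
    have hEne : E ≠ 0 := Complex.exp_ne_zero _
    have hE2 : Complex.exp (2 * ↑t * I) = E ^ 2 := by
      rw [hE, ← Complex.exp_nat_mul]; congr 1; push_cast; ring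
    have hE3 : Complex.exp (3 * ↑t * I) = E ^ 3 := by
      rw [hE, ← Complex.exp_nat_mul]; congr 1; push_cast; ring
    have hw : (a * E - E ^ 3) * (starRingEnd ℂ) u
        + (starRingEnd ℂ) ((a * E - E ^ 3) * (starRingEnd ℂ) u) = 0 := by
      rw [Complex.add_conj]
      have : ((a * E - E ^ 3) * (starRingEnd ℂ) u).re = 0 := by
        rw [← hE3]; exact ht
      rw [this]; norm_num
    have hcE : (starRingEnd ℂ) E = E⁻¹ := by
      rw [hE, ← Complex.exp_conj]
      rw [← Complex.exp_neg]
      congr 1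
      simp [Complex.conj_I]
    rw [hE2]
    -- expand conj in hw
    rw [map_mul, map_sub, map_mul, map_pow, hcE, Complex.conj_conj] at hw
    have key : -(E^2)^3 + a * (E^2)^2 - ω * (starRingEnd ℂ) a * E^2 + ω
        = u * E^3 * ((a * E - E^3) * (starRingEnd ℂ) u
          + ((starRingEnd ℂ) a * E⁻¹ - (E⁻¹)^3) * u) := by
      field_simp
      linear_combination (E^6 - a * E^4) * huc + (1 - (starRingEnd ℂ) a * E^2) * hu
    rw [key, hw, mul_zero]
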